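/- arXiv:2508.02813 — 9 statements merged into one kernel-verified Lean document; each statement's English description precedes it below -/
import Mathlib

section
/- Let F be a field, A ∈ F^{m×n}, and i ≤ min(m,n). If e_n(i) lies in the row space of A⟨i;⟩ (i.e., i is firmly frozen in A), then there exists an index j ∈ supp(A⟨i;⟩(·,i)) (that is, j ≠ i with A(j,i) ≠ 0) such that the j-th standard unit column vector e_m(j)^T does not lie in the column space of A⟨i;i⟩ (equivalently, j is not frozen in A⟨i;i⟩^T). -/
open Matrix

/-- If `i` is firmly frozen in `A`, then some `j` in the support of the `i`-th column of
`A⟨i;⟩` is such that the `j`-th unit column vector is not in the column space of `A⟨i;i⟩`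
(i.e. `j` is not frozen in `A⟨i;i⟩ᵀ`). -/
theorem stmt_7 {F : Type*} [Field F] {m n : ℕ} (A : Matrix (Fin m) (Fin n) F)
    (i : ℕ) (him : i < m) (hin : i < n)
    (h : Pi.single (⟨i, hin⟩ : Fin n) 1 ∈
      Submodule.span F (Set.range (A.updateRow ⟨i, him⟩ 0))) :
    ∃ j : Fin m, (A.updateRow ⟨i, him⟩ 0) j ⟨i, hin⟩ ≠ 0 ∧
      Pi.single j 1 ∉
        Submodule.span F (Set.range ((A.updateRow ⟨i, him⟩ 0).updateCol ⟨i, hin⟩ 0)ᵀ) := by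
  set i' : Fin n := ⟨i, hin⟩
  set i'' : Fin m := ⟨i, him⟩
  set B := A.updateRow i'' 0 with hBdef
  set C := B.updateCol i' 0 with hCdef
  replace h := (Submodule.mem_span_range_iff_exists_fun F).mp h
  obtain ⟨c, hc⟩ := h
  have hci : ∑ r, c r * B r i' = 1 := by
    have := congrFun hc i'
    simpa [Finset.sum_apply] using this
  have hex : ∃ j, c j * B j i' ≠ 0 := by
    by_contra hno
    push_neg at hno
    rw [Finset.sum_eq_zero (fun r _ => hno r)] at hci
    exact one_ne_zero hci.symm
  obtain ⟨j, hj⟩ := hex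
  have hcol : ∀ k : Fin n, ∑ r, c r * C r k = 0 := by
    intro k
    by_cases hk : k = i'
    · simp [hCdef, Matrix.updateCol_apply, hk]
    · have := congrFun hc k
      simp only [Finset.sum_apply, Pi.smul_apply, smul_eq_mul] at this
      rw [hCdef]
      simp only [Matrix.updateCol_apply, hk, if_false]
      rw [this, Pi.single_apply, if_neg hk]
  refine ⟨j, fun h0 => hj (by rw [h0, mul_zero]), fun hmem => ?_⟩
  replace hmem := (Submodule.mem_span_range_iff_exists_fun F).mp hmem
  obtain ⟨d, hd⟩ := hmem
  have hcj : c j = 0 := by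
    have h1 : c j = ∑ r, c r * (Pi.single j 1 : Fin m → F) r := by
      simp [Pi.single_apply]
    rw [h1, ← hd]
    simp only [Finset.sum_apply, Pi.smul_apply, smul_eq_mul, Matrix.transpose_apply,
      Finset.mul_sum]
    rw [Finset.sum_comm]
    refine Finset.sum_eq_zero fun k _ => ?_
    have : ∑ r, c r * (d k * C r k) = d k * ∑ r, c r * C r k := by
      rw [Finset.mul_sum]; congr 1; ext r; ring
    rw [this, hcol k, mul_zero]
  exact hj (by rw [hcj, zero_mul])
end

section
/- Let F be a field, A ∈ F^{m×n}, v ≤ min(m,n), and i ∈ [n] with i ≠ v. If i is frozen in A⟨v;v⟩ (the matrix A with row v and column v zeroed) but i is not frozen in A, then {i, v} is a proper relation of A. -/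
/-- `i` is frozen in `A` if the `i`-th standard unit row vector lies in the row space
of `A`. -/
def Matrix.IsFrozen {F : Type*} [Field F] {m n : ℕ} (A : Matrix (Fin m) (Fin n) F)
    (i : Fin n) : Prop :=
  Pi.single i 1 ∈ Submodule.span F (Set.range A)

/-- A nonempty `I ⊆ [n]` is a relation of `A` if some row combination `y ᵥ* A` has
nonempty support contained in `I`. -/
def Matrix.IsRelation {F : Type*} [Field F] {m n : ℕ} (A : Matrix (Fin m) (Fin n) F)
    (I : Set (Fin n)) : Prop :=
  ∃ y : Fin m → F, (Function.support (Matrix.vecMul y A)).Nonempty ∧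
    Function.support (Matrix.vecMul y A) ⊆ I

/-- A relation `I` of `A` is a proper relation if moreover `I` minus the set of frozen
indices of `A` is again a relation of `A`. -/
def Matrix.IsProperRelation {F : Type*} [Field F] {m n : ℕ} (A : Matrix (Fin m) (Fin n) F)
    (I : Set (Fin n)) : Prop :=
  A.IsRelation I ∧ A.IsRelation (I \ {i | A.IsFrozen i})

lemma my_vecMul_eq_sum {F : Type*} [Field F] {m n : ℕ} (A : Matrix (Fin m) (Fin n) F)
    (y : Fin m → F) : Matrix.vecMul y A = ∑ j, y j • A j := by
  funext k
  simp [Matrix.vecMul, dotProduct, Finset.sum_apply, smul_eq_mul]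

lemma my_vecMul_mem_span {F : Type*} [Field F] {m n : ℕ} (A : Matrix (Fin m) (Fin n) F)
    (y : Fin m → F) : Matrix.vecMul y A ∈ Submodule.span F (Set.range A) := by
  rw [my_vecMul_eq_sum]
  exact Submodule.sum_mem _ fun j _ =>
    Submodule.smul_mem _ _ (Submodule.subset_span ⟨j, rfl⟩)


/-- If `i ≠ v` becomes frozen after zeroing row `v` and column `v` of `A`, while `i` was
not frozen in `A`, then `{i, v}` is a proper relation of `A`. -/
theorem stmt_8 {F : Type*} [Field F] {m n : ℕ} (A : Matrix (Fin m) (Fin n) F)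
    (v : ℕ) (hvm : v < m) (hvn : v < n) (i : Fin n) (hiv : i ≠ ⟨v, hvn⟩)
    (hfrozen : Matrix.IsFrozen (Matrix.updateCol (Matrix.updateRow A ⟨v, hvm⟩ 0) ⟨v, hvn⟩ 0) i)
    (hnot : ¬ A.IsFrozen i) :
    A.IsProperRelation {i, ⟨v, hvn⟩} := by
  set V : Fin n := ⟨v, hvn⟩
  set Vm : Fin m := ⟨v, hvm⟩
  set B := (A.updateRow Vm 0).updateCol V 0 with hB
  obtain ⟨c, hc⟩ := (Submodule.mem_span_range_iff_exists_fun F).mp hfrozen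
  have hcB : Matrix.vecMul c B = Pi.single i 1 := by
    rw [my_vecMul_eq_sum]; exact hc
  set w : Fin m → F := Function.update c Vm 0 with hw
  -- key: for k ≠ V, (w ᵥ* A) k = Pi.single i 1 k
  have h1 : ∀ k : Fin n, k ≠ V → Matrix.vecMul w A k = (Pi.single i 1 : Fin n → F) k := by
    intro k hk
    rw [← hcB]
    simp only [Matrix.vecMul, dotProduct]
    apply Finset.sum_congr rfl
    intro j _
    by_cases hj : j = Vm
    · subst hj
      simp [hw, hB, Matrix.updateCol_apply, Matrix.updateRow_apply]
    · simp [hw, Function.update_of_ne hj, hB, Matrix.updateCol_apply,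
        Matrix.updateRow_apply, hk, hj]
  have hi1 : Matrix.vecMul w A i = 1 := by
    rw [h1 i hiv, Pi.single_eq_same]
  have hsupp : Function.support (Matrix.vecMul w A) ⊆ {i, V} := by
    intro k hk
    by_contra hkI
    simp only [Set.mem_insert_iff, Set.mem_singleton_iff, not_or] at hkI
    exact hk (by rw [h1 k hkI.2, Pi.single_eq_of_ne hkI.1])
  have hne : (Function.support (Matrix.vecMul w A)).Nonempty :=
    ⟨i, by simp [hi1]⟩
  have hVnot : ¬ A.IsFrozen V := by
    intro hV
    apply hnot
    have : (Pi.single i 1 : Fin n → F) =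
        Matrix.vecMul w A - Matrix.vecMul w A V • (Pi.single V 1 : Fin n → F) := by
      funext k
      by_cases hk : k = V
      · subst hk
        simp [Pi.single_eq_of_ne (Ne.symm hiv)]
      · simp [h1 k hk, Pi.single_eq_of_ne hk]
    rw [Matrix.IsFrozen, this]
    exact Submodule.sub_mem _ (my_vecMul_mem_span A w)
      (Submodule.smul_mem _ _ hV)
  refine ⟨⟨w, hne, hsupp⟩, ⟨w, hne, ?_⟩⟩
  intro k hk
  refine ⟨hsupp hk, ?_⟩
  rcases hsupp hk with hk' | hk'
  · subst hk'; exact hnot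
  · simp only [Set.mem_singleton_iff] at hk'; subst hk'; exact hVnot
end

section
/- Let F be a field, A ∈ F^{m×n}, v ≤ min(m,n), and i ∈ [n] with i ∉ {v} ∪ supp(A(v,·)). If i is frozen in A but i is not frozen in A⟨v;v⟩ (the matrix A with row v and column v zeroed), then the set {i} ∪ (supp(A(v,·)) \ {v}) is a proper relation of A⟨v;v⟩. -/
open Matrix in
lemma isFrozen_iff_exists {F : Type*} [Field F] {m n : ℕ} (M : Matrix (Fin m) (Fin n) F)
    (i : Fin n) : M.IsFrozen i ↔ ∃ y : Fin m → F, y ᵥ* M = Pi.single i 1 := by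
  rw [Matrix.IsFrozen, show Set.range M = Set.range M.row from rfl, ← range_vecMulLinear]
  simp [LinearMap.mem_range, Matrix.vecMulLinear_apply]

open Matrix in
/-- If `i ∉ {v} ∪ supp(A(v,·))` is frozen in `A` but becomes unfrozen after zeroing row
`v` and column `v`, then `{i} ∪ (supp(A(v,·)) \ {v})` is a proper relation of the matrix
with row `v` and column `v` zeroed. -/
theorem stmt_9 {F : Type*} [Field F] {m n : ℕ} (A : Matrix (Fin m) (Fin n) F)
    (v : ℕ) (hvm : v < m) (hvn : v < n) (i : Fin n)
    (hiv : i ≠ ⟨v, hvn⟩) (hAvi : A ⟨v, hvm⟩ i = 0)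
    (hfrozen : A.IsFrozen i)
    (hnot : ¬ ((A.updateRow ⟨v, hvm⟩ 0).updateCol ⟨v, hvn⟩ 0).IsFrozen i) :
    ((A.updateRow ⟨v, hvm⟩ 0).updateCol ⟨v, hvn⟩ 0).IsProperRelation
      (insert i ({k : Fin n | A ⟨v, hvm⟩ k ≠ 0} \ {(⟨v, hvn⟩ : Fin n)})) := by
  classical
  obtain ⟨y, hy⟩ := (isFrozen_iff_exists A i).mp hfrozen
  set vr : Fin m := ⟨v, hvm⟩ with hvr
  set vc : Fin n := ⟨v, hvn⟩ with hvc
  set B : Matrix (Fin m) (Fin n) F := (A.updateRow vr 0).updateCol vc 0 with hBdef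
  have hBapp : ∀ j k, B j k = if k = vc then 0 else if j = vr then 0 else A j k := by
    intro j k
    by_cases hk : k = vc <;> by_cases hj : j = vr <;>
      simp [hBdef, Matrix.updateCol_apply, Matrix.updateRow_apply, hk, hj]
  have key : ∀ (u : Fin m → F) (k : Fin n), u vr = 0 →
      (u ᵥ* B) k = if k = vc then 0 else (u ᵥ* A) k := by
    intro u k hu
    simp only [Matrix.vecMul, dotProduct, hBapp]
    by_cases hk : k = vc
    · simp [hk]
    · simp only [hk, if_false]
      refine Finset.sum_congr rfl fun j _ => ?_
      by_cases hj : j = vr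
      · simp [hj, hu]
      · simp [hj]
  set z : Fin m → F := Function.update y vr 0 with hzdef
  have hzv : z vr = 0 := by simp [hzdef]
  have hzA : ∀ k, (z ᵥ* A) k = (Pi.single i 1 : Fin n → F) k - y vr * A vr k := by
    intro k
    have h3 : ∀ j, z j * A j k = y j * A j k - (if j = vr then y vr * A vr k else 0) := by
      intro j
      by_cases hj : j = vr
      · simp [hj, hzdef]
      · simp [hzdef, Function.update_of_ne hj, hj]
    have h1 : (z ᵥ* A) k = ∑ j, z j * A j k := by
      simp [Matrix.vecMul, dotProduct]
    have h2 : (y ᵥ* A) k = ∑ j, y j * A j k := by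
      simp [Matrix.vecMul, dotProduct]
    rw [h1]
    calc ∑ j, z j * A j k
        = ∑ j, (y j * A j k - if j = vr then y vr * A vr k else 0) :=
          Finset.sum_congr rfl fun j _ => h3 j
      _ = (∑ j, y j * A j k) - ∑ j, (if j = vr then y vr * A vr k else 0) :=
          Finset.sum_sub_distrib _ _
      _ = (y ᵥ* A) k - y vr * A vr k := by rw [← h2]; simp
      _ = (Pi.single i 1 : Fin n → F) k - y vr * A vr k := by rw [hy]
  have hw : ∀ k, (z ᵥ* B) k = if k = vc then 0 else (Pi.single i 1 : Fin n → F) k - y vr * A vr k := by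
    intro k
    rw [key z k hzv]
    by_cases hk : k = vc
    · simp [hk]
    · simp [hk, hzA k]
  have hwi : (z ᵥ* B) i = 1 := by
    rw [hw i]
    simp [hiv, hAvi]
  have hsupp : Function.support (z ᵥ* B) ⊆
      insert i ({k : Fin n | A vr k ≠ 0} \ {vc}) := by
    intro k hk
    rw [Function.mem_support, hw k] at hk
    by_cases hkc : k = vc
    · simp [hkc] at hk
    · simp only [hkc, if_false] at hk
      by_cases hki : k = i
      · exact hki ▸ Set.mem_insert _ _
      · have : (Pi.single i 1 : Fin n → F) k = 0 := by
          rw [Pi.single_eq_of_ne hki]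
        rw [this] at hk
        have hA : A vr k ≠ 0 := by
          intro h0
          apply hk
          rw [h0, mul_zero, sub_zero]
        exact Set.mem_insert_of_mem _ ⟨hA, hkc⟩
  constructor
  · exact ⟨z, ⟨i, by rw [Function.mem_support, hwi]; exact one_ne_zero⟩, hsupp⟩
  · -- proper part
    set w : Fin n → F := z ᵥ* B with hwdef
    set S : Finset (Fin n) := Finset.univ.filter (fun k => B.IsFrozen k ∧ w k ≠ 0) with hS
    have hgex : ∀ k : Fin n, ∃ u : Fin m → F, B.IsFrozen k → u ᵥ* B = Pi.single k 1 := by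
      intro k
      by_cases h : B.IsFrozen k
      · obtain ⟨u, hu⟩ := (isFrozen_iff_exists B k).mp h
        exact ⟨u, fun _ => hu⟩
      · exact ⟨0, fun h' => absurd h' h⟩
    choose g hg using hgex
    set y' : Fin m → F := z - ∑ k ∈ S, w k • g k with hy'def
    have hy'B : y' ᵥ* B = w - ∑ k ∈ S, w k • (Pi.single k 1 : Fin n → F) := by
      rw [hy'def, Matrix.sub_vecMul]
      congr 1
      have : (∑ k ∈ S, w k • g k) ᵥ* B = B.vecMulLinear (∑ k ∈ S, w k • g k) := rfl
      rw [this, map_sum]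
      refine Finset.sum_congr rfl fun k hk => ?_
      rw [LinearMap.map_smul, Matrix.vecMulLinear_apply, hg k (Finset.mem_filter.mp hk).2.1]
    have hsum : ∀ k, (∑ j ∈ S, w j • (Pi.single j 1 : Fin n → F)) k =
        if k ∈ S then w k else 0 := by
      intro k
      rw [Finset.sum_apply]
      simp only [Pi.smul_apply, Pi.single_apply, smul_eq_mul, mul_ite, mul_one, mul_zero]
      rw [Finset.sum_ite_eq S k w]
    have hiS : i ∉ S := by
      simp only [hS, Finset.mem_filter, Finset.mem_univ, true_and, not_and]
      intro hf
      exact absurd hf hnot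
    have hy'k : ∀ k, (y' ᵥ* B) k = if k ∈ S then 0 else w k := by
      intro k
      rw [hy'B, Pi.sub_apply, hsum k]
      by_cases hk : k ∈ S <;> simp [hk]
    refine ⟨y', ⟨i, ?_⟩, ?_⟩
    · rw [Function.mem_support, hy'k i, if_neg hiS, hwi]
      exact one_ne_zero
    · intro k hk
      rw [Function.mem_support, hy'k k] at hk
      by_cases hkS : k ∈ S
      · simp [hkS] at hk
      · rw [if_neg hkS] at hk
        refine ⟨hsupp hk, ?_⟩
        intro hf
        exact hkS (Finset.mem_filter.mpr ⟨Finset.mem_univ k, hf, hk⟩)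
end

section
/- Let F be a field and A ∈ F^{n×n} a symmetric matrix. Suppose u, v ∈ [n] with u ≠ v are such that A(v,u) ≠ 0 and A(v,j) = 0 for all j ≠ u (so, viewing A as a weighted adjacency matrix, v is a degree-1 vertex whose unique neighbor is u). Then rank(A) = rank(A⟨u,v;u,v⟩) + 2, where A⟨u,v;u,v⟩ is the matrix obtained from A by replacing rows u, v and columns u, v by zero rows and zero columns. In other words, removing a leaf together with its unique neighbor decreases the rank of the (weighted) adjacency matrix by exactly 2, over any field and for any nonzero edge weights. -/
open Matrix


/-- Removing a leaf (a degree-one vertex `v`) together with its unique neighbor `u`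
decreases the rank of the weighted adjacency matrix by exactly `2`, over any field and for
any nonzero edge weights: if `A` is symmetric, `A v u ≠ 0` and `A v j = 0` for `j ≠ u`,
then `rank A = rank A⟨u,v;u,v⟩ + 2`. -/
theorem stmt_11 {F : Type*} [Field F] {n : ℕ} (A : Matrix (Fin n) (Fin n) F)
    (hA : A.IsSymm) (u v : Fin n) (huv : u ≠ v)
    (hvu : A v u ≠ 0) (hrow : ∀ j : Fin n, j ≠ u → A v j = 0) :
    A.rank =
      (Matrix.of fun k l : Fin n =>
        if k = u ∨ k = v ∨ l = u ∨ l = v then (0 : F) else A k l).rank + 2 := by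
  classical
  set B : Matrix (Fin n) (Fin n) F := Matrix.of fun k l : Fin n =>
        if k = u ∨ k = v ∨ l = u ∨ l = v then (0 : F) else A k l with hBdef
  have hvu' : v ≠ u := Ne.symm huv
  have hAvv : A v v = 0 := hrow v hvu'
  have hAuv : A u v = A v u := (hA.apply u v).symm
  have hcolv : ∀ i : Fin n, i ≠ u → A i v = 0 := fun i hi => by
    rw [← hA.apply]; exact hrow i hi
  -- column v of A
  have hAtv : ∀ i : Fin n, Aᵀ v i = if i = u then A v u else 0 := by
    intro i
    by_cases hi : i = u
    · simp [hi, Matrix.transpose_apply, hAuv]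
    · simp [hi, Matrix.transpose_apply, hcolv i hi]
  set S : Submodule F (Fin n → F) := Submodule.span F {Aᵀ u, Aᵀ v} with hS
  set R : Submodule F (Fin n → F) := Submodule.span F (Set.range Bᵀ) with hR
  -- elements of R vanish at coordinates u and v
  have hRzero : ∀ x ∈ R, x u = 0 ∧ x v = 0 := by
    intro x hx
    have : R ≤ LinearMap.ker (LinearMap.proj u : (Fin n → F) →ₗ[F] F) ⊓
        LinearMap.ker (LinearMap.proj v : (Fin n → F) →ₗ[F] F) := by
      rw [hR]
      apply Submodule.span_le.mpr
      rintro _ ⟨j, rfl⟩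
      constructor <;> simp [Matrix.transpose_apply, hBdef]
    exact this hx
  -- values at u and v of elements of S
  have hSval : ∀ s t : F, (s • Aᵀ u + t • Aᵀ v) v = s * A v u ∧
      (s • Aᵀ u + t • Aᵀ v) u = s * A u u + t * A v u := by
    intro s t
    constructor
    · simp [Matrix.transpose_apply, hAtv, hvu', hAvv, hA.apply]
    · simp [Matrix.transpose_apply, hAtv, hAuv]
  -- decomposition of columns
  have hcol : ∀ j : Fin n, j ≠ u → j ≠ v → Aᵀ j = Bᵀ j + (A u j / A v u) • Aᵀ v := by
    intro j hju hjv
    funext i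
    simp only [Pi.add_apply, Pi.smul_apply, Matrix.transpose_apply, smul_eq_mul]
    by_cases hiu : i = u
    · rw [hiu]
      have h1 : B u j = 0 := by simp [hBdef]
      rw [h1, hAuv, zero_add, div_mul_cancel₀ _ hvu]
    · by_cases hiv : i = v
      · rw [hiv]
        have h1 : B v j = 0 := by simp [hBdef]
        rw [h1, hAvv, hrow j hju, zero_add, mul_zero]
      · have h1 : B i j = A i j := by simp [hBdef, hiu, hiv, hju, hjv]
        rw [h1, hcolv i hiu, mul_zero, add_zero]
  -- column space equality
  have hspan : Submodule.span F (Set.range Aᵀ) = R ⊔ S := by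
    apply le_antisymm
    · apply Submodule.span_le.mpr
      rintro _ ⟨j, rfl⟩
      by_cases hju : j = u
      · rw [hju]
        exact Submodule.mem_sup_right (Submodule.subset_span (by simp))
      · by_cases hjv : j = v
        · rw [hjv]
          exact Submodule.mem_sup_right (Submodule.subset_span (by simp))
        · rw [hcol j hju hjv]
          exact Submodule.add_mem _
            (Submodule.mem_sup_left (Submodule.subset_span ⟨j, rfl⟩))
            (Submodule.smul_mem _ _
              (Submodule.mem_sup_right (Submodule.subset_span (by simp))))
    · apply sup_le
      · apply Submodule.span_le.mpr
        rintro _ ⟨j, rfl⟩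
        by_cases hju : j = u
        · have : Bᵀ j = 0 := by funext i; simp [hBdef, Matrix.transpose_apply, hju]
          rw [this]; exact Submodule.zero_mem _
        · by_cases hjv : j = v
          · have : Bᵀ j = 0 := by funext i; simp [hBdef, Matrix.transpose_apply, hjv]
            rw [this]; exact Submodule.zero_mem _
          · have : Bᵀ j = Aᵀ j - (A u j / A v u) • Aᵀ v := by
              rw [hcol j hju hjv]; abel
            rw [this]
            exact Submodule.sub_mem _ (Submodule.subset_span ⟨j, rfl⟩)
              (Submodule.smul_mem _ _ (Submodule.subset_span ⟨v, rfl⟩))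
      · apply Submodule.span_le.mpr
        rintro x hx
        rcases hx with h | h
        · exact h ▸ Submodule.subset_span ⟨u, rfl⟩
        · simp only [Set.mem_singleton_iff] at h
          exact h ▸ Submodule.subset_span ⟨v, rfl⟩
  -- trivial intersection
  have hinf : R ⊓ S = ⊥ := by
    rw [eq_bot_iff]
    rintro x ⟨hxR, hxS⟩
    obtain ⟨s, t, rfl⟩ := Submodule.mem_span_pair.mp hxS
    obtain ⟨hu0, hv0⟩ := hRzero _ hxR
    obtain ⟨h1, h2⟩ := hSval s t
    have hs : s = 0 := by
      have := h1.symm.trans hv0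
      exact (mul_eq_zero.mp this).resolve_right hvu
    subst hs
    have ht : t = 0 := by
      have := h2.symm.trans hu0
      rw [zero_mul, zero_add] at this
      exact (mul_eq_zero.mp this).resolve_right hvu
    subst ht
    simp
  -- finrank of S is 2
  have hindep : LinearIndependent F ![Aᵀ u, Aᵀ v] := by
    rw [LinearIndependent.pair_iff]
    intro s t hst
    obtain ⟨h1, h2⟩ := hSval s t
    rw [hst] at h1 h2
    have hs : s = 0 := (mul_eq_zero.mp h1.symm).resolve_right hvu
    subst hs
    rw [zero_mul, zero_add] at h2
    exact ⟨rfl, (mul_eq_zero.mp h2.symm).resolve_right hvu⟩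
  have hSrank : Module.finrank F S = 2 := by
    have hrange : Set.range ![Aᵀ u, Aᵀ v] = {Aᵀ u, Aᵀ v} := by
      simp [Matrix.range_cons, Matrix.range_empty, Set.pair_comm]
    rw [hS, ← hrange, finrank_span_eq_card hindep]
    simp
  -- put it together
  rw [Matrix.rank_eq_finrank_span_cols, Matrix.rank_eq_finrank_span_cols]
  show Module.finrank F (Submodule.span F (Set.range Aᵀ)) = Module.finrank F (Submodule.span F (Set.range Bᵀ)) + 2
  rw [hspan, ← hR]
  have := Submodule.finrank_sup_add_finrank_inf_eq R S
  rw [hinf] at this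
  simp only [finrank_bot, add_zero] at this
  omega
end

section
/- Let G be a finite simple graph on vertex set [n], F a field, and A ∈ F^{n×n} a symmetric matrix such that for all i, j ∈ [n]: A(i,j) ≠ 0 if and only if i ≠ j and {i,j} is an edge of G. Then for every positive integer f, ν(G) ≥ ((f−1)/(2f))·rank_F(A) − (1/2)·∑_{k odd, 3 ≤ k < f} c_k(G), where ν(G) is the matching number of G and c_k(G) is the number of cycles of length k in G. -/
open Finset Matrix



/-- The matching number of a graph: the largest cardinality of a set of pairwise
disjoint edges. -/
noncomputable def matchingNumber {V : Type*} (G : SimpleGraph V) : ℕ :=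
  sSup {m : ℕ | ∃ M : Finset (Sym2 V), (↑M : Set (Sym2 V)) ⊆ G.edgeSet ∧
    (∀ e ∈ M, ∀ e' ∈ M, e ≠ e' → ∀ v : V, ¬(v ∈ e ∧ v ∈ e')) ∧ M.card = m}

/-- The number of cycles of length `k` in `G`: the number of connected `2`-regular
subgraphs of `G` with exactly `k` vertices. -/
noncomputable def cycleCount {V : Type*} (G : SimpleGraph V) (k : ℕ) : ℕ :=
  Set.ncard {H : G.Subgraph | H.verts.ncard = k ∧ H.Connected ∧
    ∀ v ∈ H.verts, (H.neighborSet v).ncard = 2}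

section helpers
variable {K M : Type*} [Field K] [AddCommGroup M] [Module K M]

lemma sel_cols {α : Type*} [Fintype α] (w : α → M) (r : ℕ)
    (hr : Module.finrank K (Submodule.span K (Set.range w)) = r) :
    ∃ g : Fin r → α, Function.Injective g ∧ LinearIndependent K (w ∘ g) := by
  classical
  obtain ⟨b, hbsub, hbspan, hbind⟩ := exists_linearIndependent K (Set.range w)
  have hbfin : b.Finite := (Set.finite_range w).subset hbsub
  haveI : Fintype b := hbfin.fintype
  have hcard : Fintype.card b = r := by
    rw [← hr, ← hbspan]
    rw [finrank_span_set_eq_card hbind]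
    exact (Set.toFinset_card b).symm
  let e : Fin r ≃ b := (Fintype.equivFinOfCardEq hcard).symm
  have hchoice : ∀ x : b, ∃ a : α, w a = (x : M) := fun x => hbsub x.2
  choose g hg using hchoice
  refine ⟨fun i => g (e i), ?_, ?_⟩
  · intro i j hij
    have h2 : w (g (e i)) = w (g (e j)) := congrArg w hij
    rw [hg, hg] at h2
    exact e.injective (Subtype.ext h2)
  · have : (w ∘ fun i => g (e i)) = (Subtype.val : b → M) ∘ e := by
      funext i; simp [Function.comp, hg]
    rw [this]
    exact hbind.comp e e.injective
end helpers

lemma exists_invertible_submatrix {n : ℕ} {F : Type*} [Field F]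
    (A : Matrix (Fin n) (Fin n) F) :
    ∃ e g : Fin A.rank → Fin n, Function.Injective e ∧ Function.Injective g ∧
      (A.submatrix e g).det ≠ 0 := by
  classical
  obtain ⟨g, hginj, hgind⟩ := sel_cols (K := F) (fun j => Aᵀ j) A.rank
    (by exact (Matrix.rank_eq_finrank_span_cols A).symm)
  set B : Matrix (Fin n) (Fin A.rank) F := A.submatrix id g with hB
  have hBT : Bᵀ = fun i => (Aᵀ ∘ g) i := by
    funext i j; rfl
  have hrankB : B.rank = A.rank := by
    rw [Matrix.rank_eq_finrank_span_cols, show B.col = fun i => (Aᵀ ∘ g) i from hBT]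
    have : Set.range (fun i => (Aᵀ ∘ g) i) = Set.range (Aᵀ ∘ g) := rfl
    rw [this, finrank_span_eq_card hgind, Fintype.card_fin]
  obtain ⟨e, heinj, heind⟩ := sel_cols (K := F) (fun i => B i) A.rank
    (by
      have h1 : Bᵀ.rank = A.rank := by rw [Matrix.rank_transpose]; exact hrankB
      rw [Matrix.rank_eq_finrank_span_cols] at h1
      exact h1)
  refine ⟨e, g, heinj, hginj, ?_⟩
  have : LinearIndependent F (fun i => (A.submatrix e g) i) := by
    have : (fun i => (A.submatrix e g) i) = ((fun i => B i) ∘ e) := by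
      funext i; rfl
    rw [this]; exact heind
  have hunit : IsUnit (A.submatrix e g) := Matrix.linearIndependent_rows_iff_isUnit.mp this
  have := (Matrix.isUnit_iff_isUnit_det _).mp hunit
  exact this.ne_zero

lemma exists_perm_of_det_ne_zero {r : ℕ} {F : Type*} [Field F]
    (C : Matrix (Fin r) (Fin r) F) (h : C.det ≠ 0) :
    ∃ σ : Equiv.Perm (Fin r), ∀ i, C (σ i) i ≠ 0 := by
  by_contra hc
  push_neg at hc
  apply h
  rw [Matrix.det_apply]
  apply Finset.sum_eq_zero
  intro σ _
  obtain ⟨i, hi⟩ := hc σ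
  rw [show (∏ i, C (σ i) i) = 0 from Finset.prod_eq_zero (Finset.mem_univ i) hi, smul_zero]

lemma extend_to_perm {n r : ℕ} (a b : Fin r → Fin n)
    (ha : Function.Injective a) (hb : Function.Injective b) :
    ∃ π : Equiv.Perm (Fin n), ∀ i, π (a i) = b i := by
  classical
  set Sa : Finset (Fin n) := Finset.univ.image a with hSa
  set Sb : Finset (Fin n) := Finset.univ.image b with hSb
  have hcarda : Sa.card = r := by
    rw [hSa, Finset.card_image_of_injective _ ha, Finset.card_univ, Fintype.card_fin]
  have hcardb : Sb.card = r := by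
    rw [hSb, Finset.card_image_of_injective _ hb, Finset.card_univ, Fintype.card_fin]
  have hcc : Fintype.card (↥(Saᶜ)) = Fintype.card (↥(Sbᶜ)) := by
    simp only [Fintype.card_coe, Finset.card_compl, hcarda, hcardb]
  let ψ : ↥(Saᶜ) ≃ ↥(Sbᶜ) := Fintype.equivOfCardEq hcc
  have hina : ∀ i, a i ∈ Sa := fun i => Finset.mem_image_of_mem a (Finset.mem_univ i)
  have hinb : ∀ i, b i ∈ Sb := fun i => Finset.mem_image_of_mem b (Finset.mem_univ i)
  -- eA : Fin r ⊕ ↥(Saᶜ) ≃ Fin n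
  have hbijA : Function.Bijective (Sum.elim a (fun x : ↥(Saᶜ) => (x : Fin n))) := by
    rw [Fintype.bijective_iff_injective_and_card]
    constructor
    · intro x y hxy
      cases x with
      | inl i => cases y with
        | inl j => simp only [Sum.elim_inl] at hxy; exact congrArg _ (ha hxy)
        | inr z => exfalso; simp only [Sum.elim_inl, Sum.elim_inr] at hxy
                   have := z.2; rw [← hxy] at this
                   exact (Finset.mem_compl.mp this) (hina i)
      | inr z => cases y with
        | inl j => exfalso; simp only [Sum.elim_inl, Sum.elim_inr] at hxy
                   have := z.2; rw [hxy] at this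
                   exact (Finset.mem_compl.mp this) (hina j)
        | inr w => simp only [Sum.elim_inr] at hxy; exact congrArg _ (Subtype.ext hxy)
    · simp only [Fintype.card_sum, Fintype.card_coe, Fintype.card_fin, Finset.card_compl,
        hcarda]
      have : r ≤ n := by
        calc r = Sa.card := hcarda.symm
        _ ≤ Fintype.card (Fin n) := Finset.card_le_univ Sa
        _ = n := Fintype.card_fin n
      omega
  have hbijB : Function.Bijective (Sum.elim b (fun x : ↥(Sbᶜ) => (x : Fin n))) := by
    rw [Fintype.bijective_iff_injective_and_card]
    constructor
    · intro x y hxy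
      cases x with
      | inl i => cases y with
        | inl j => simp only [Sum.elim_inl] at hxy; exact congrArg _ (hb hxy)
        | inr z => exfalso; simp only [Sum.elim_inl, Sum.elim_inr] at hxy
                   have := z.2; rw [← hxy] at this
                   exact (Finset.mem_compl.mp this) (hinb i)
      | inr z => cases y with
        | inl j => exfalso; simp only [Sum.elim_inl, Sum.elim_inr] at hxy
                   have := z.2; rw [hxy] at this
                   exact (Finset.mem_compl.mp this) (hinb j)
        | inr w => simp only [Sum.elim_inr] at hxy; exact congrArg _ (Subtype.ext hxy)
    · simp only [Fintype.card_sum, Fintype.card_coe, Fintype.card_fin, Finset.card_compl,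
        hcardb]
      have : r ≤ n := by
        calc r = Sb.card := hcardb.symm
        _ ≤ Fintype.card (Fin n) := Finset.card_le_univ Sb
        _ = n := Fintype.card_fin n
      omega
  let eA := Equiv.ofBijective _ hbijA
  let eB := Equiv.ofBijective _ hbijB
  refine ⟨eA.symm.trans ((Equiv.sumCongr (Equiv.refl (Fin r)) ψ).trans eB), fun i => ?_⟩
  have h1 : eA.symm (a i) = Sum.inl i := by
    apply eA.injective; rw [Equiv.apply_symm_apply]; rfl
  simp [h1, eA, eB]

lemma arith_comb (f s2 k a c j d : ℕ) (h6 : f * s2 ≤ 2*f*a + f*c + s2)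
    (hk : f * k ≤ 2*f*j + f*d + k) :
    f * (s2 + k) ≤ 2*f*(a+j) + f*(c+d) + (s2 + k) := by
  have e1 : f * (s2 + k) = f*s2 + f*k := by ring
  have e2 : 2*f*(a+j) = 2*f*a + 2*f*j := by ring
  have e3 : f*(c+d) = f*c + f*d := by ring
  rw [e1, e2, e3]; linarith

lemma arith_path (f s s2 a c : ℕ) (h6 : f*s2 ≤ 2*f*a + f*c + s2) (h1 : s ≤ s2 + 2)
    (h2 : s2 ≤ s) : f*s ≤ 2*f*(a+1) + f*c + s := by
  have e0 : f*s ≤ f*(s2+2) := Nat.mul_le_mul_left f h1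
  have e : f*(s2+2) = f*s2 + 2*f := by ring
  have e2 : 2*f*(a+1) = 2*f*a + 2*f := by ring
  linarith

lemma cycle_peel {n : ℕ} (G : SimpleGraph (Fin n)) (f : ℕ) :
    ∀ N : ℕ, ∀ S : Finset (Fin n), S.card ≤ N → ∀ π : Equiv.Perm (Fin n),
    (∀ v ∈ S, G.Adj v (π v)) →
    ∃ (M : Finset (Sym2 (Fin n))) (Cyc : Finset G.Subgraph),
      (∀ e ∈ M, e ∈ G.edgeSet) ∧
      (∀ e ∈ M, ∀ e' ∈ M, e ≠ e' → ∀ v : Fin n, ¬(v ∈ e ∧ v ∈ e')) ∧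
      (∀ e ∈ M, ∀ v ∈ e, v ∈ S ∨ ∃ u ∈ S, v = π u) ∧
      (∀ H ∈ Cyc, H.Connected ∧ (∀ v ∈ H.verts, (H.neighborSet v).ncard = 2) ∧
        Odd H.verts.ncard ∧ 3 ≤ H.verts.ncard ∧ H.verts.ncard < f) ∧
      (∀ H ∈ Cyc, ∀ u ∈ H.verts, u ∈ S) ∧
      f * S.card ≤ 2 * f * M.card + f * Cyc.card + S.card := by
  classical
  intro N
  induction N with
  | zero =>
    intro S hS π _
    have : S = ∅ := Finset.card_eq_zero.mp (Nat.le_zero.mp hS)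
    subst this
    exact ⟨∅, ∅, by simp, by simp, by simp, by simp, by simp, by simp⟩
  | succ N IH =>
    intro S hS π hadj
    by_cases hSN : S.card ≤ N
    · exact IH S hSN π hadj
    have hSne : S.Nonempty := by rw [← Finset.card_pos]; omega
    by_cases hpath : ∃ v ∈ S, v ∉ S.image π
    · -- path case
      obtain ⟨v, hvS, hvim⟩ := hpath
      set S2 := S \ {v, π v} with hS2
      have hS2sub : S2 ⊆ S := Finset.sdiff_subset
      have hS2lt : S2.card < S.card := by
        apply Finset.card_lt_card
        refine ⟨hS2sub, fun hsub => ?_⟩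
        have := hsub hvS
        rw [hS2, Finset.mem_sdiff] at this
        exact this.2 (by simp)
      obtain ⟨M', Cyc', h1, h2, h3, h4, h5, h6⟩ :=
        IH S2 (by omega) π (fun u hu => hadj u (hS2sub hu))
      have hnotv : ∀ e ∈ M', ∀ u, u ∈ e → u ≠ v ∧ u ≠ π v := by
        intro e he u hu
        rcases h3 e he u hu with h | ⟨w, hw, rfl⟩
        · rw [hS2, Finset.mem_sdiff] at h
          constructor
          · rintro rfl; exact h.2 (by simp)
          · rintro rfl; exact h.2 (by simp)
        · have hwS2 := Finset.mem_sdiff.mp hw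
          constructor
          · intro hvw
            exact hvim (hvw ▸ Finset.mem_image_of_mem π hwS2.1)
          · intro hww
            have : w = v := π.injective hww
            subst this
            exact hwS2.2 (by simp)
      have hnotmem : s(v, π v) ∉ M' := by
        intro hmem
        exact (hnotv _ hmem v (Sym2.mem_mk_left _ _)).1 rfl
      refine ⟨insert s(v, π v) M', Cyc', ?_, ?_, ?_, h4,
        (fun H hH u hu => hS2sub (h5 H hH u hu)), ?_⟩
      · intro e he
        rcases Finset.mem_insert.mp he with rfl | he
        · exact G.mem_edgeSet.mpr (hadj v hvS)
        · exact h1 e he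
      · intro e he e' he' hne u hu
        rcases Finset.mem_insert.mp he with rfl | he
        · rcases Finset.mem_insert.mp he' with rfl | he'
          · exact hne rfl
          · obtain ⟨hn1, hn2⟩ := hnotv e' he' u hu.2
            rcases Sym2.mem_iff.mp hu.1 with rfl | rfl
            · exact hn1 rfl
            · exact hn2 rfl
        · rcases Finset.mem_insert.mp he' with rfl | he'
          · obtain ⟨hn1, hn2⟩ := hnotv e he u hu.1
            rcases Sym2.mem_iff.mp hu.2 with rfl | rfl
            · exact hn1 rfl
            · exact hn2 rfl
          · exact h2 e he e' he' hne u hu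
      · intro e he u hu
        rcases Finset.mem_insert.mp he with rfl | he
        · rcases Sym2.mem_iff.mp hu with rfl | rfl
          · exact Or.inl hvS
          · exact Or.inr ⟨v, hvS, rfl⟩
        · rcases h3 e he u hu with h | ⟨w, hw, rfl⟩
          · exact Or.inl (hS2sub h)
          · exact Or.inr ⟨w, hS2sub hw, rfl⟩
      · rw [Finset.card_insert_of_notMem hnotmem]
        have hle : S.card ≤ S2.card + 2 := by
          have hc1 : S.card ≤ S2.card + ({v, π v} : Finset (Fin n)).card := by
            rw [hS2]; exact Finset.card_le_card_sdiff_add_card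
          have hc2 : ({v, π v} : Finset (Fin n)).card ≤ 2 := by
            apply le_trans (Finset.card_insert_le _ _); simp
          omega
        exact arith_path f S.card S2.card M'.card Cyc'.card h6 hle
          (Finset.card_le_card hS2sub)
    · -- cycle case
      push_neg at hpath
      have himg : S.image π = S :=
        (Finset.eq_of_subset_of_card_le hpath Finset.card_image_le).symm
      have hmemS : ∀ u ∈ S, π u ∈ S := fun u hu => himg ▸ Finset.mem_image_of_mem π hu
      have hmemS' : ∀ u ∈ S, π.symm u ∈ S := by
        intro u hu
        rw [← himg] at hu
        obtain ⟨w, hw, rfl⟩ := Finset.mem_image.mp hu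
        rwa [Equiv.symm_apply_apply]
      obtain ⟨v, hvS⟩ := hSne
      set k := Function.minimalPeriod (⇑π) v with hkdef
      have hper : Function.IsPeriodicPt (⇑π) (orderOf π) v := by
        show (⇑π)^[orderOf π] v = v
        rw [Equiv.Perm.iterate_eq_pow, pow_orderOf_eq_one]
        rfl
      have hperiodic : v ∈ Function.periodicPts ⇑π :=
        Function.mk_mem_periodicPts (orderOf_pos π) hper
      have hk0 : 0 < k := Function.minimalPeriod_pos_of_mem_periodicPts hperiodic
      have hperk : (⇑π)^[k] v = v := Function.isPeriodicPt_minimalPeriod (⇑π) v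
      have horbS : ∀ m, (⇑π)^[m] v ∈ S := by
        intro m
        induction m with
        | zero => exact hvS
        | succ m ih => rw [Function.iterate_succ_apply']; exact hmemS _ ih
      have hk1 : k ≠ 1 := by
        intro h1
        have h2 : π v = v := by
          have := hperk
          rw [h1] at this
          simpa using this
        have h3 := hadj v hvS
        rw [h2] at h3
        exact G.loopless.irrefl v h3
      have hk2 : 2 ≤ k := by omega
      have hinj : ∀ m1, m1 < k → ∀ m2, m2 < k → (⇑π)^[m1] v = (⇑π)^[m2] v → m1 = m2 := by
        intro m1 hm1 m2 hm2 heq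
        by_contra hne
        wlog hlt : m1 < m2 generalizing m1 m2
        · exact this m2 hm2 m1 hm1 heq.symm (Ne.symm hne) (by omega)
        have hiter : (⇑π)^[m2 - m1] v = v := by
          have hinjit : Function.Injective ((⇑π)^[m1]) :=
            Function.Injective.iterate π.injective m1
          apply hinjit
          rw [← Function.iterate_add_apply]
          have : m1 + (m2 - m1) = m2 := by omega
          rw [this]
          exact heq.symm
        have hle := Function.IsPeriodicPt.minimalPeriod_le
          (show 0 < m2 - m1 by omega) (hiter : Function.IsPeriodicPt (⇑π) (m2 - m1) v)
        omega
      set O : Finset (Fin n) := (Finset.range k).image (fun m => (⇑π)^[m] v) with hO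
      have hvO : v ∈ O := Finset.mem_image.mpr ⟨0, Finset.mem_range.mpr hk0, rfl⟩
      have hOS : O ⊆ S := by
        intro u hu
        obtain ⟨m, _, rfl⟩ := Finset.mem_image.mp hu
        exact horbS m
      have hOcard : O.card = k := by
        rw [hO, Finset.card_image_of_injOn, Finset.card_range]
        intro m1 h1 m2 h2 h
        exact hinj m1 (Finset.mem_range.mp h1) m2 (Finset.mem_range.mp h2) h
      have horbO : ∀ m, (⇑π)^[m] v ∈ O := by
        intro m
        rw [hO, Finset.mem_image]
        exact ⟨m % k, Finset.mem_range.mpr (Nat.mod_lt _ hk0),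
          (Function.isPeriodicPt_minimalPeriod (⇑π) v).iterate_mod_apply m⟩
      have hπO : ∀ u ∈ O, π u ∈ O := by
        intro u hu
        obtain ⟨m, _, rfl⟩ := Finset.mem_image.mp hu
        have h1 : π ((⇑π)^[m] v) = (⇑π)^[m+1] v := (Function.iterate_succ_apply' (⇑π) m v).symm
        rw [h1]
        exact horbO (m+1)
      have hπO' : ∀ u ∈ O, π.symm u ∈ O := by
        intro u hu
        obtain ⟨m, _, rfl⟩ := Finset.mem_image.mp hu
        have h1 : (⇑π)^[m + (k-1)] v = π.symm ((⇑π)^[m] v) := by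
          apply π.injective
          rw [Equiv.apply_symm_apply]
          have h3 : π ((⇑π)^[m + (k-1)] v) = (⇑π)^[(m + (k-1)) + 1] v :=
            (Function.iterate_succ_apply' (⇑π) (m + (k-1)) v).symm
          rw [h3, show m + (k-1) + 1 = m + k from by omega,
            Function.iterate_add_apply, hperk]
        rw [← h1]
        exact horbO _
      set S2 := S \ O with hS2
      have hS2sub : S2 ⊆ S := Finset.sdiff_subset
      have hS2lt : S2.card < S.card := by
        apply Finset.card_lt_card
        refine ⟨hS2sub, fun hsub => ?_⟩
        have := hsub (hOS hvO)
        rw [hS2, Finset.mem_sdiff] at this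
        exact this.2 hvO
      have hcards : S.card = S2.card + k := by
        have h1 : S2.card = S.card - O.card := Finset.card_sdiff_of_subset hOS
        have h2 : O.card ≤ S.card := Finset.card_le_card hOS
        omega
      obtain ⟨M', Cyc', h1, h2, h3, h4, h5, h6⟩ :=
        IH S2 (by omega) π (fun u hu => hadj u (hS2sub hu))
      have hM'O : ∀ e ∈ M', ∀ u, u ∈ e → u ∉ O := by
        intro e he u hu huO
        rcases h3 e he u hu with h | ⟨w, hw, rfl⟩
        · exact (Finset.mem_sdiff.mp h).2 huO
        · refine (Finset.mem_sdiff.mp hw).2 ?_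
          have := hπO' _ huO
          rwa [Equiv.symm_apply_apply] at this
      set MA : Finset (Sym2 (Fin n)) :=
        (Finset.range (k/2)).image (fun m => s((⇑π)^[2*m] v, (⇑π)^[2*m+1] v)) with hMA
      have hMAmem : ∀ e ∈ MA, ∃ m, m < k/2 ∧ e = s((⇑π)^[2*m] v, (⇑π)^[2*m+1] v) := by
        intro e he
        obtain ⟨m, hm, rfl⟩ := Finset.mem_image.mp he
        exact ⟨m, Finset.mem_range.mp hm, rfl⟩
      have hMAcard : MA.card = k / 2 := by
        rw [hMA, Finset.card_image_of_injOn, Finset.card_range]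
        intro m1 hm1 m2 hm2 h
        rw [Finset.mem_coe, Finset.mem_range] at hm1 hm2
        rcases Sym2.eq_iff.mp h with ⟨ha, _⟩ | ⟨ha, _⟩
        · have := hinj _ (by omega) _ (by omega) ha; omega
        · have := hinj _ (by omega) _ (by omega) ha; omega
      have hMAedge : ∀ e ∈ MA, e ∈ G.edgeSet := by
        intro e he
        obtain ⟨m, hm, rfl⟩ := hMAmem e he
        rw [SimpleGraph.mem_edgeSet]
        have h1 : (⇑π)^[2*m+1] v = π ((⇑π)^[2*m] v) := Function.iterate_succ_apply' (⇑π) (2*m) v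
        rw [h1]
        exact hadj _ (horbS _)
      have hMAvert : ∀ e ∈ MA, ∀ u, u ∈ e → u ∈ O := by
        intro e he u hu
        obtain ⟨m, hm, rfl⟩ := hMAmem e he
        rcases Sym2.mem_iff.mp hu with rfl | rfl
        · exact horbO _
        · exact horbO _
      have hdisjMA : Disjoint M' MA := by
        rw [Finset.disjoint_left]
        intro e heM' heMA
        obtain ⟨m, hm, rfl⟩ := hMAmem e heMA
        exact hM'O _ heM' _ (Sym2.mem_mk_left _ _) (horbO _)
      set Mb := M' ∪ MA with hMb
      have hMbcard : Mb.card = M'.card + k/2 := by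
        rw [hMb, Finset.card_union_of_disjoint hdisjMA, hMAcard]
      have hMbedge : ∀ e ∈ Mb, e ∈ G.edgeSet := by
        intro e he
        rcases Finset.mem_union.mp he with he | he
        · exact h1 e he
        · exact hMAedge e he
      have hMbdisj : ∀ e ∈ Mb, ∀ e' ∈ Mb, e ≠ e' → ∀ u : Fin n, ¬(u ∈ e ∧ u ∈ e') := by
        intro e he e' he' hne u hu
        rcases Finset.mem_union.mp he with he | he
        · rcases Finset.mem_union.mp he' with he' | he'
          · exact h2 e he e' he' hne u hu
          · exact hM'O e he u hu.1 (hMAvert e' he' u hu.2)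
        · rcases Finset.mem_union.mp he' with he' | he'
          · exact hM'O e' he' u hu.2 (hMAvert e he u hu.1)
          · obtain ⟨m1, hm1, rfl⟩ := hMAmem e he
            obtain ⟨m2, hm2, rfl⟩ := hMAmem e' he'
            have hmm : m1 ≠ m2 := fun hmm => hne (by rw [hmm])
            rcases Sym2.mem_iff.mp hu.1 with h | h <;>
              rcases Sym2.mem_iff.mp hu.2 with h' | h'
            · have := hinj (2*m1) (by omega) (2*m2) (by omega) (h.symm.trans h'); omega
            · have := hinj (2*m1) (by omega) (2*m2+1) (by omega) (h.symm.trans h'); omega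
            · have := hinj (2*m1+1) (by omega) (2*m2) (by omega) (h.symm.trans h'); omega
            · have := hinj (2*m1+1) (by omega) (2*m2+1) (by omega) (h.symm.trans h'); omega
      have hMbvert : ∀ e ∈ Mb, ∀ u ∈ e, u ∈ S ∨ ∃ w ∈ S, u = π w := by
        intro e he u hu
        rcases Finset.mem_union.mp he with he | he
        · rcases h3 e he u hu with h | ⟨w, hw, rfl⟩
          · exact Or.inl (hS2sub h)
          · exact Or.inr ⟨w, hS2sub hw, rfl⟩
        · exact Or.inl (hOS (hMAvert e he u hu))
      have hCycS : ∀ H ∈ Cyc', ∀ u ∈ H.verts, u ∈ S := fun H hH u hu => hS2sub (h5 H hH u hu)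
      rcases Nat.even_or_odd k with hke | hko
      · -- k even
        refine ⟨Mb, Cyc', hMbedge, hMbdisj, hMbvert, h4, hCycS, ?_⟩
        rw [hMbcard, hcards]
        have h2k : 2 * (k / 2) = k := by have := Nat.even_iff.mp hke; omega
        have hkineq : f * k ≤ 2*f*(k/2) + f*0 + k := by
          have e1 : 2*f*(k/2) = f * (2*(k/2)) := by ring
          rw [e1, h2k, mul_zero, add_zero]
          exact Nat.le_add_right _ _
        simpa using arith_comb f S2.card k M'.card Cyc'.card (k/2) 0 h6 hkineq
      · -- k odd
        have hkodd := Nat.odd_iff.mp hko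
        have hk3 : 3 ≤ k := by omega
        have h2k : 2 * (k / 2) + 1 = k := by omega
        by_cases hkf : f ≤ k
        · refine ⟨Mb, Cyc', hMbedge, hMbdisj, hMbvert, h4, hCycS, ?_⟩
          rw [hMbcard, hcards]
          have hkineq : f * k ≤ 2*f*(k/2) + f*0 + k := by
            have e1 : f * k = 2*f*(k/2) + f := by
              conv_lhs => rw [← h2k]
              ring
            rw [e1, mul_zero, add_zero]
            exact Nat.add_le_add_left hkf _
          simpa using arith_comb f S2.card k M'.card Cyc'.card (k/2) 0 h6 hkineq
        · -- k < f : produce a cycle subgraph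
          push_neg at hkf
          have hππ : ∀ u ∈ O, π u ≠ π.symm u := by
            intro u hu heq
            have h2per : Function.IsPeriodicPt (⇑π) 2 u := by
              show (⇑π)^[2] u = u
              have h22 : (⇑π)^[2] u = π (π u) := rfl
              rw [h22, heq]
              exact π.apply_symm_apply u
            have hle := Function.IsPeriodicPt.minimalPeriod_le (by norm_num) h2per
            obtain ⟨m, _, rfl⟩ := Finset.mem_image.mp hu
            rw [Function.minimalPeriod_apply_iterate hperiodic m] at hle
            omega
          set H : G.Subgraph := {
              verts := ↑O
              Adj := fun a b => a ∈ O ∧ b ∈ O ∧ (b = π a ∨ a = π b)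
              adj_sub := by
                rintro a b ⟨ha, hb, rfl | rfl⟩
                · exact hadj a (hOS ha)
                · exact (hadj b (hOS hb)).symm
              edge_vert := by
                rintro a b ⟨ha, _, _⟩
                exact Finset.mem_coe.mpr ha
              symm := by
                constructor
                rintro a b ⟨ha, hb, h⟩
                exact ⟨hb, ha, h.symm⟩ } with hH
          have hHvcard : H.verts.ncard = k := by
            show (↑O : Set (Fin n)).ncard = k
            rw [Set.ncard_coe_finset, hOcard]
          have hreach : ∀ m : ℕ, H.coe.Reachable ⟨v, Finset.mem_coe.mpr hvO⟩
              ⟨(⇑π)^[m] v, Finset.mem_coe.mpr (horbO m)⟩ := by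
            intro m
            induction m with
            | zero => exact SimpleGraph.Reachable.refl _
            | succ m ih =>
              refine ih.trans (SimpleGraph.Adj.reachable ?_)
              show H.Adj ((⇑π)^[m] v) ((⇑π)^[m+1] v)
              exact ⟨horbO m, horbO (m+1), Or.inl (Function.iterate_succ_apply' (⇑π) m v)⟩
          have hHconn : H.Connected := by
            rw [SimpleGraph.Subgraph.connected_iff]
            constructor
            · constructor
              intro a b
              have key : ∀ c : H.verts, H.coe.Reachable ⟨v, Finset.mem_coe.mpr hvO⟩ c := by
                intro c
                have hc : (c : Fin n) ∈ O := Finset.mem_coe.mp c.2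
                obtain ⟨m, _, hm⟩ := Finset.mem_image.mp hc
                have hcc : (⟨(⇑π)^[m] v, Finset.mem_coe.mpr (horbO m)⟩ : H.verts) = c :=
                  Subtype.ext hm
                rw [← hcc]
                exact hreach m
              exact (key a).symm.trans (key b)
            · exact ⟨v, Finset.mem_coe.mpr hvO⟩
          have hHreg : ∀ u ∈ H.verts, (H.neighborSet u).ncard = 2 := by
            intro u hu
            have huO : u ∈ O := Finset.mem_coe.mp hu
            have hset : H.neighborSet u = {π u, π.symm u} := by
              ext w
              constructor
              · rintro ⟨_, hwO, rfl | heq⟩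
                · exact Set.mem_insert _ _
                · have hw : w = π.symm u := by rw [heq, Equiv.symm_apply_apply]
                  exact hw ▸ Set.mem_insert_iff.mpr (Or.inr rfl)
              · intro hw
                rcases Set.mem_insert_iff.mp hw with rfl | hw2
                · exact ⟨huO, hπO u huO, Or.inl rfl⟩
                · rw [Set.mem_singleton_iff] at hw2
                  subst hw2
                  exact ⟨huO, hπO' u huO, Or.inr (π.apply_symm_apply u).symm⟩
            rw [hset]
            exact Set.ncard_pair (hππ u huO)
          have hHnotin : H ∉ Cyc' := by
            intro hmem
            have := h5 H hmem v (Finset.mem_coe.mpr hvO)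
            exact (Finset.mem_sdiff.mp this).2 hvO
          refine ⟨Mb, insert H Cyc', hMbedge, hMbdisj, hMbvert, ?_, ?_, ?_⟩
          · intro H' hH'
            rcases Finset.mem_insert.mp hH' with rfl | hH'
            · refine ⟨hHconn, hHreg, ?_, ?_, ?_⟩
              · rw [hHvcard]; exact hko
              · rw [hHvcard]; exact hk3
              · rw [hHvcard]; exact hkf
            · exact h4 H' hH'
          · intro H' hH' u hu
            rcases Finset.mem_insert.mp hH' with rfl | hH'
            · exact hOS (Finset.mem_coe.mp hu)
            · exact hCycS H' hH' u hu
          · rw [hMbcard, hcards, Finset.card_insert_of_notMem hHnotin]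
            have hkineq : f * k ≤ 2*f*(k/2) + f*1 + k := by
              have e1 : f * k = 2*f*(k/2) + f := by
                conv_lhs => rw [← h2k]
                ring
              rw [e1, mul_one]
              exact Nat.le_add_right _ _
            simpa using arith_comb f S2.card k M'.card Cyc'.card (k/2) 1 h6 hkineq


lemma subgraph_finite {n : ℕ} (G : SimpleGraph (Fin n)) : Finite G.Subgraph := by
  let F : G.Subgraph → Set (Fin n) × Set (Fin n × Fin n) :=
    fun H => (H.verts, {p | H.Adj p.1 p.2})
  have hinj : Function.Injective F := by
    intro H1 H2 h
    have h1 := congrArg Prod.fst h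
    have h2 := congrArg Prod.snd h
    simp only [F] at h1 h2
    refine SimpleGraph.Subgraph.ext h1 ?_
    funext a b
    exact propext (Set.ext_iff.mp h2 (a, b))
  exact Finite.of_injective F hinj

/-- For a weighted adjacency matrix `A` of a finite simple graph `G` over any field,
`ν(G) ≥ ((f−1)/(2f))·rank(A) − (1/2)·∑_{k odd, 3 ≤ k < f} c_k(G)` for every positive
integer `f`. -/
theorem stmt_12 {n : ℕ} (G : SimpleGraph (Fin n)) {F : Type*} [Field F]
    (A : Matrix (Fin n) (Fin n) F) (hA : A.IsSymm)
    (hAG : ∀ i j : Fin n, A i j ≠ 0 ↔ (i ≠ j ∧ G.Adj i j))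
    (f : ℕ) (hf : 0 < f) :
    ((f - 1 : ℝ) / (2 * f)) * (A.rank : ℝ) -
        (1 / 2) * ∑ k ∈ (Finset.range f).filter (fun k => Odd k ∧ 3 ≤ k),
          (cycleCount G k : ℝ)
      ≤ (matchingNumber G : ℝ) := by
  classical
  obtain ⟨e, g, he, hg, hdet⟩ := exists_invertible_submatrix A
  obtain ⟨σ, hσ⟩ := exists_perm_of_det_ne_zero _ hdet
  obtain ⟨π, hπ⟩ := extend_to_perm (fun i => e (σ i)) g (he.comp σ.injective) hg
  have hinj2 : Function.Injective (fun i => e (σ i)) := fun a b h => σ.injective (he h)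
  set S : Finset (Fin n) := Finset.univ.image (fun i => e (σ i)) with hS
  have hScard : S.card = A.rank := by
    rw [hS, Finset.card_image_of_injective _ hinj2, Finset.card_univ,
      Fintype.card_fin]
  have hadj : ∀ v ∈ S, G.Adj v (π v) := by
    intro v hv
    obtain ⟨i, _, rfl⟩ := Finset.mem_image.mp hv
    rw [hπ i]
    exact ((hAG _ _).mp (hσ i)).2
  obtain ⟨M, Cyc, h1, h2, h3, h4, h5, h6⟩ := cycle_peel G f S.card S le_rfl π hadj
  have hν : M.card ≤ matchingNumber G := by
    apply le_csSup
    · refine ⟨Fintype.card (Sym2 (Fin n)), ?_⟩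
      rintro m ⟨Mm, _, _, rfl⟩
      exact Finset.card_le_univ Mm
    · exact ⟨M, fun x hx => h1 x (Finset.mem_coe.mp hx), h2, rfl⟩
  haveI : Finite G.Subgraph := subgraph_finite G
  have hC : Cyc.card ≤ ∑ k ∈ (Finset.range f).filter (fun k => Odd k ∧ 3 ≤ k),
      cycleCount G k := by
    rw [Finset.card_eq_sum_card_fiberwise
      (f := fun H : G.Subgraph => H.verts.ncard)
      (t := (Finset.range f).filter (fun k => Odd k ∧ 3 ≤ k))
      (by
        intro H hH
        obtain ⟨_, _, hodd, h3le, hlt⟩ := h4 H hH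
        rw [Finset.mem_coe, Finset.mem_filter, Finset.mem_range]
        exact ⟨hlt, hodd, h3le⟩)]
    apply Finset.sum_le_sum
    intro k _
    rw [cycleCount, ← Set.ncard_coe_finset]
    apply Set.ncard_le_ncard
    · intro H hH
      rw [Finset.coe_filter, Set.mem_setOf] at hH
      obtain ⟨hHC, hcard⟩ := hH
      obtain ⟨hconn, hreg, _, _, _⟩ := h4 H hHC
      exact ⟨hcard, hconn, hreg⟩
    · exact Set.toFinite _
  -- real arithmetic
  have key : (f : ℝ) * (A.rank : ℝ) ≤ 2*(f:ℝ)*(M.card : ℝ) + (f:ℝ)*(Cyc.card : ℝ)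
      + (A.rank : ℝ) := by
    rw [hScard] at h6
    exact_mod_cast h6
  have hMR : (M.card : ℝ) ≤ (matchingNumber G : ℝ) := by exact_mod_cast hν
  have hCR : (Cyc.card : ℝ) ≤ ∑ k ∈ (Finset.range f).filter (fun k => Odd k ∧ 3 ≤ k),
      (cycleCount G k : ℝ) := by
    calc (Cyc.card : ℝ) ≤ ((∑ k ∈ (Finset.range f).filter (fun k => Odd k ∧ 3 ≤ k),
        cycleCount G k : ℕ) : ℝ) := by exact_mod_cast hC
    _ = _ := by push_cast; rfl
  have hfR : (1:ℝ) ≤ (f:ℝ) := by exact_mod_cast hf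
  rw [div_mul_eq_mul_div, sub_le_iff_le_add, div_le_iff₀ (by positivity : (0:ℝ) < 2*(f:ℝ))]
  have hb1 : 2*(f:ℝ)*(M.card : ℝ) ≤ 2*(f:ℝ)*(matchingNumber G : ℝ) := by
    apply mul_le_mul_of_nonneg_left hMR
    positivity
  have hb2 : (f:ℝ)*(Cyc.card : ℝ) ≤ (f:ℝ)*(∑ k ∈ (Finset.range f).filter
      (fun k => Odd k ∧ 3 ≤ k), (cycleCount G k : ℝ)) := by
    apply mul_le_mul_of_nonneg_left hCR
    positivity
  nlinarith [key, hb1, hb2]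
end

section
/- Let ψ̂(α) = ∑_{k=0}^d q_k α^k be a real polynomial with q_k ≥ 0 for all k and ∑_{k=0}^d q_k = 1 (so ψ̂ maps [0,1] nondecreasingly into [0,1] with ψ̂(1) = 1). Define G(α) = α + ψ̂(1 − ψ̂(α)) − 1 for α ∈ [0,1]. Then: (i) G has at least one zero in [0,1]; (ii) if α ∈ [0,1] satisfies G(α) = 0, then G(1 − ψ̂(α)) = 0; (iii) the smallest zero α_* of G in [0,1] and the largest zero α^* of G in [0,1] satisfy α_* = 1 − ψ̂(α^*) and α^* = 1 − ψ̂(α_*). -/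
/-- The probability generating function `ψ̂(α) = ∑_{k=0}^d q_k α^k`. -/
noncomputable def pgf (d : ℕ) (q : ℕ → ℝ) (α : ℝ) : ℝ :=
  ∑ k ∈ Finset.range (d + 1), q k * α ^ k

/-- The fixed-point function `G(α) = α + ψ̂(1 − ψ̂(α)) − 1`. -/
noncomputable def fpG (d : ℕ) (q : ℕ → ℝ) (α : ℝ) : ℝ :=
  α + pgf d q (1 - pgf d q α) - 1

section aux

variable {d : ℕ} {q : ℕ → ℝ}

lemma pgf_nonneg (hq : ∀ k ≤ d, 0 ≤ q k) {α : ℝ} (hα : 0 ≤ α) :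
    0 ≤ pgf d q α := by
  apply Finset.sum_nonneg
  intro k hk
  exact mul_nonneg (hq k (Nat.lt_succ_iff.mp (Finset.mem_range.mp hk))) (pow_nonneg hα k)

lemma pgf_mono (hq : ∀ k ≤ d, 0 ≤ q k) {α β : ℝ} (hα : 0 ≤ α) (hαβ : α ≤ β) :
    pgf d q α ≤ pgf d q β := by
  apply Finset.sum_le_sum
  intro k hk
  exact mul_le_mul_of_nonneg_left (pow_le_pow_left₀ hα hαβ k)
    (hq k (Nat.lt_succ_iff.mp (Finset.mem_range.mp hk)))

lemma pgf_one (hsum : ∑ k ∈ Finset.range (d + 1), q k = 1) : pgf d q 1 = 1 := by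
  simpa [pgf] using hsum

lemma pgf_le_one (hq : ∀ k ≤ d, 0 ≤ q k)
    (hsum : ∑ k ∈ Finset.range (d + 1), q k = 1) {α : ℝ} (hα : 0 ≤ α) (hα1 : α ≤ 1) :
    pgf d q α ≤ 1 := by
  calc pgf d q α ≤ pgf d q 1 := pgf_mono hq hα hα1
    _ = 1 := pgf_one hsum

lemma pgf_mem (hq : ∀ k ≤ d, 0 ≤ q k)
    (hsum : ∑ k ∈ Finset.range (d + 1), q k = 1) {α : ℝ} (hα : α ∈ Set.Icc (0 : ℝ) 1) :
    1 - pgf d q α ∈ Set.Icc (0 : ℝ) 1 := by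
  constructor
  · linarith [pgf_le_one hq hsum hα.1 hα.2]
  · linarith [pgf_nonneg hq hα.1]

lemma pgf_continuous : Continuous (pgf d q) := by
  unfold pgf
  exact continuous_finset_sum _ fun k _ => (continuous_const.mul (continuous_pow k))

end aux

/-- For a probability generating function `ψ̂` of a distribution on `{0,…,d}` and
`G(α) = α + ψ̂(1 − ψ̂(α)) − 1`: (i) `G` has a zero in `[0,1]`; (ii) zeros are mapped to
zeros by `α ↦ 1 − ψ̂(α)`; (iii) the least zero `α_*` and the greatest zero `α^*` in
`[0,1]` satisfy `α_* = 1 − ψ̂(α^*)` and `α^* = 1 − ψ̂(α_*)`. -/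
theorem stmt_13 (d : ℕ) (q : ℕ → ℝ) (hq : ∀ k ≤ d, 0 ≤ q k)
    (hsum : ∑ k ∈ Finset.range (d + 1), q k = 1) :
    (∃ α ∈ Set.Icc (0 : ℝ) 1, fpG d q α = 0) ∧
    (∀ α ∈ Set.Icc (0 : ℝ) 1, fpG d q α = 0 → fpG d q (1 - pgf d q α) = 0) ∧
    (∀ a b : ℝ,
      IsLeast {α : ℝ | α ∈ Set.Icc (0 : ℝ) 1 ∧ fpG d q α = 0} a →
      IsGreatest {α : ℝ | α ∈ Set.Icc (0 : ℝ) 1 ∧ fpG d q α = 0} b →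
      a = 1 - pgf d q b ∧ b = 1 - pgf d q a) := by
  have hzero : ∀ α ∈ Set.Icc (0 : ℝ) 1, fpG d q α = 0 → fpG d q (1 - pgf d q α) = 0 := by
    intro α hα h0
    have h1 : pgf d q (1 - pgf d q α) = 1 - α := by
      unfold fpG at h0; linarith
    unfold fpG
    rw [h1]
    have : (1 : ℝ) - (1 - α) = α := by ring
    rw [this]
    linarith
  refine ⟨?_, hzero, ?_⟩
  · -- IVT
    have hcont : Continuous (fpG d q) := by
      unfold fpG
      exact ((continuous_id.add (pgf_continuous.comp (continuous_const.sub
        pgf_continuous))).sub continuous_const)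
    have h0 : fpG d q 0 ≤ 0 := by
      have h0m : (0:ℝ) ∈ Set.Icc (0:ℝ) 1 := by constructor <;> norm_num
      have := pgf_le_one hq hsum (pgf_mem hq hsum h0m).1 (pgf_mem hq hsum h0m).2
      unfold fpG; linarith
    have h1 : 0 ≤ fpG d q 1 := by
      have h1m : (1:ℝ) ∈ Set.Icc (0:ℝ) 1 := by constructor <;> norm_num
      have := pgf_nonneg hq (pgf_mem hq hsum h1m).1
      unfold fpG; linarith
    have := intermediate_value_Icc (by norm_num : (0:ℝ) ≤ 1) hcont.continuousOn
    have hmem : (0:ℝ) ∈ Set.Icc (fpG d q 0) (fpG d q 1) := ⟨h0, h1⟩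
    obtain ⟨α, hα, hα0⟩ := this hmem
    exact ⟨α, hα, hα0⟩
  · intro a b ha hb
    obtain ⟨⟨haI, haz⟩, hla⟩ := ha
    obtain ⟨⟨hbI, hbz⟩, hub⟩ := hb
    -- 1 - ψ(b) is a zero in [0,1], so a ≤ 1 - ψ(b)
    have hbimg := pgf_mem hq hsum hbI
    have haimg := pgf_mem hq hsum haI
    have h1 : a ≤ 1 - pgf d q b := hla ⟨hbimg, hzero b hbI hbz⟩
    have h2 : 1 - pgf d q a ≤ b := hub ⟨haimg, hzero a haI haz⟩
    -- from fpG b = 0 : ψ(1 - ψ(b)) = 1 - b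
    have hb' : pgf d q (1 - pgf d q b) = 1 - b := by unfold fpG at hbz; linarith
    -- ψ(a) ≤ ψ(1 - ψ(b)) = 1 - b, so b ≤ 1 - ψ(a)
    have h3 : pgf d q a ≤ 1 - b := hb' ▸ pgf_mono hq haI.1 h1
    have hbeq : b = 1 - pgf d q a := le_antisymm (by linarith) h2
    -- from fpG a = 0 : a = 1 - ψ(1 - ψ(a)) = 1 - ψ(b)
    have haeq : a = 1 - pgf d q b := by
      have : fpG d q a = 0 := haz
      unfold fpG at this
      rw [← hbeq] at this
      linarith
    exact ⟨haeq, hbeq⟩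
end

section
/- Let ψ be a real polynomial with ψ'(1) ≠ 0, and set ψ̂(α) = ψ'(α)/ψ'(1), G(α) = α + ψ̂(1 − ψ̂(α)) − 1, and R_ψ(α) = 2 − ψ(1 − ψ̂(α)) − ψ(α) − ψ'(α)·(1 − α). Then for every α ∈ ℝ, the derivative of R_ψ satisfies R_ψ'(α) = ψ''(α)·G(α). -/
open Polynomial

/-- The rank functional `R_ψ(α) = 2 − ψ(1 − ψ'(α)/ψ'(1)) − ψ(α) − ψ'(α)(1−α)` has
derivative `R_ψ'(α) = ψ''(α)·G(α)`, where `G(α) = α + ψ̂(1 − ψ̂(α)) − 1` and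
`ψ̂ = ψ'/ψ'(1)`. -/
theorem stmt_14 (ψ : Polynomial ℝ) (h1 : (derivative ψ).eval 1 ≠ 0) (α : ℝ) :
    HasDerivAt
      (fun t : ℝ => 2 - ψ.eval (1 - (derivative ψ).eval t / (derivative ψ).eval 1)
        - ψ.eval t - (derivative ψ).eval t * (1 - t))
      ((derivative (derivative ψ)).eval α *
        (α + (derivative ψ).eval (1 - (derivative ψ).eval α / (derivative ψ).eval 1) /
          (derivative ψ).eval 1 - 1))
      α := by
  set c := (derivative ψ).eval 1 with hc
  -- inner function t ↦ 1 - ψ'(t)/c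
  have hinner : HasDerivAt (fun t : ℝ => 1 - (derivative ψ).eval t / c)
      (-((derivative (derivative ψ)).eval α / c)) α := by
    have := ((derivative ψ).hasDerivAt α).div_const c
    have h := (hasDerivAt_const α (1:ℝ)).sub this
    simp at h
    exact h
  have houter : HasDerivAt (fun t : ℝ => ψ.eval (1 - (derivative ψ).eval t / c))
      ((derivative ψ).eval (1 - (derivative ψ).eval α / c) *
        (-((derivative (derivative ψ)).eval α / c))) α :=
    (ψ.hasDerivAt _).comp α hinner
  have h3 : HasDerivAt (fun t : ℝ => (derivative ψ).eval t * (1 - t))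
      ((derivative (derivative ψ)).eval α * (1 - α) + (derivative ψ).eval α * (-1)) α := by
    have h4 : HasDerivAt (fun t : ℝ => (1 : ℝ) - t) (-1) α := by
      have h := (hasDerivAt_const α (1:ℝ)).sub (hasDerivAt_id α)
      simp at h
      exact h
    exact ((derivative ψ).hasDerivAt α).mul h4
  have := (((hasDerivAt_const α (2:ℝ)).sub houter).sub (ψ.hasDerivAt α)).sub h3
  convert this using 1
  · rfl
  · rfl
  · rfl
  ring
end

section
/- Let F be a field, A ∈ F^{n×n} a symmetric matrix, and v ∈ [n] with A(v,v) = 0. Let S = supp(A(v,·)) = {k ∈ [n] : A(v,k) ≠ 0}. Suppose that for every i ∈ S there exists a row vector y ∈ F^{1×n} with y_k = 0 for all k ∈ S and y·A⟨v;v⟩ = e_n(i), where A⟨v;v⟩ is A with row v and column v zeroed. Then the v-th row A(v,·) lies in the span of the remaining rows {A(j,·) : j ∈ [n], j ≠ v}; in particular rank(A) = rank(A⟨v;⟩). -/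
/-- If `A` is symmetric with `A v v = 0` and every `i` in the support of row `v` admits a
representation `y` of the unit vector `e_n(i)` in `A⟨v;v⟩` with `y` vanishing on the
support of row `v`, then row `v` of `A` lies in the span of the other rows; in particular
`rank A = rank A⟨v;⟩`. -/
theorem stmt_16 {F : Type*} [Field F] {n : ℕ} (A : Matrix (Fin n) (Fin n) F)
    (hA : A.IsSymm) (v : Fin n) (hvv : A v v = 0)
    (h : ∀ i : Fin n, A v i ≠ 0 → ∃ y : Fin n → F, (∀ k, A v k ≠ 0 → y k = 0) ∧
          Matrix.vecMul y ((A.updateRow v 0).updateCol v 0) = Pi.single i 1) :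
    A v ∈ Submodule.span F (A '' {j : Fin n | j ≠ v}) ∧
      A.rank = (A.updateRow v 0).rank := by
  classical
  set B := (A.updateRow v 0).updateCol v 0 with hB
  -- choose the representing vectors
  let y : Fin n → Fin n → F := fun i =>
    if hi : A v i ≠ 0 then (h i hi).choose else 0
  have hy0 : ∀ i k, A v k ≠ 0 → y i k = 0 := by
    intro i k hk
    by_cases hi : A v i ≠ 0
    · simp only [y, dif_pos hi]
      exact ((h i hi).choose_spec).1 k hk
    · have hi' : A v i = 0 := not_not.mp hi
      simp [y, hi']
  have hyB : ∀ i, A v i ≠ 0 → Matrix.vecMul (y i) B = Pi.single i 1 := by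
    intro i hi
    simp only [y, dif_pos hi]
    exact ((h i hi).choose_spec).2
  -- the combination
  let z : Fin n → F := fun j => ∑ i, A v i * y i j
  have hzS : ∀ j, A v j ≠ 0 → z j = 0 := by
    intro j hj
    apply Finset.sum_eq_zero
    intro i _
    rw [hy0 i j hj, mul_zero]
  have hzB : Matrix.vecMul z B = A v := by
    funext k
    simp only [Matrix.vecMul, dotProduct, z, Finset.sum_mul]
    rw [Finset.sum_comm]
    have : ∀ i, ∑ j, A v i * y i j * B j k =
        A v i * (Pi.single i 1 : Fin n → F) k := by
      intro i
      by_cases hi : A v i ≠ 0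
      · rw [← hyB i hi]
        simp only [Matrix.vecMul, dotProduct, Finset.mul_sum, mul_assoc]
      · push_neg at hi
        simp [hi]
    rw [Finset.sum_congr rfl fun i _ => this i]
    by_cases hk : A v k ≠ 0
    · rw [Finset.sum_eq_single k]
      · simp
      · intro b _ hb; exact mul_eq_zero_of_right _ (Pi.single_eq_of_ne hb.symm 1)
      · simp
    · push_neg at hk
      rw [hk]
      apply Finset.sum_eq_zero
      intro i _
      rcases eq_or_ne i k with rfl | hik
      · simp [hk]
      · simp [Pi.single_eq_of_ne' hik]
  -- w : the combination supported away from v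
  let w : Fin n → F := Function.update z v 0
  have hwv : w v = 0 := Function.update_self v 0 z
  have hwj : ∀ j, j ≠ v → w j = z j := fun j hj => Function.update_of_ne hj 0 z
  have hwA : Matrix.vecMul w A = A v := by
    funext k
    rcases eq_or_ne k v with hkv | hk
    · -- k = v : each term vanishes
      rw [hkv]
      have : ∀ j, w j * A j v = 0 := by
        intro j
        rcases eq_or_ne j v with rfl | hj
        · rw [hwv, zero_mul]
        · have hAjk : A j v = A v j := by
            have := congrFun (congrFun hA.eq j) v
            simpa [Matrix.transpose_apply] using this.symm
          by_cases hAv : A v j ≠ 0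
          · rw [hwj j hj, hzS j hAv, zero_mul]
          · push_neg at hAv
            rw [hAjk, hAv, mul_zero]
      simp only [Matrix.vecMul, dotProduct]
      exact (Finset.sum_eq_zero fun j _ => this j).trans hvv.symm
    · -- k ≠ v : agrees with z ⬝ B
      have := congrFun hzB k
      simp only [Matrix.vecMul, dotProduct] at this ⊢
      rw [← this]
      apply Finset.sum_congr rfl
      intro j _
      rcases eq_or_ne j v with rfl | hj
      · simp [hwv, hB, Matrix.updateCol_apply, Matrix.updateRow_apply, hk]
      · rw [hwj j hj]
        simp [hB, Matrix.updateCol_apply, Matrix.updateRow_apply, hk, hj]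
  -- row v in span of the other rows
  have hvecsum : A v = ∑ j, w j • A j := by
    rw [← hwA]
    funext k
    simp [Matrix.vecMul, dotProduct, Finset.sum_apply]
  have hmem : A v ∈ Submodule.span F (A '' {j : Fin n | j ≠ v}) := by
    rw [hvecsum]
    apply Submodule.sum_mem
    intro j _
    rcases eq_or_ne j v with rfl | hj
    · rw [hwv, zero_smul]; exact Submodule.zero_mem _
    · exact Submodule.smul_mem _ _ (Submodule.subset_span ⟨j, hj, rfl⟩)
  refine ⟨hmem, ?_⟩
  -- rank equality via row spans
  have hspan : Submodule.span F (Set.range A) =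
      Submodule.span F (Set.range (A.updateRow v 0)) := by
    apply le_antisymm
    · rw [Submodule.span_le]
      rintro _ ⟨j, rfl⟩
      rcases eq_or_ne j v with rfl | hj
      · refine Submodule.span_mono ?_ hmem
        rintro _ ⟨k, hk, rfl⟩
        exact ⟨k, Matrix.updateRow_ne (M := A) hk⟩
      · exact Submodule.subset_span ⟨j, Matrix.updateRow_ne (M := A) hj⟩
    · rw [Submodule.span_le]
      rintro _ ⟨j, rfl⟩
      rcases eq_or_ne j v with rfl | hj
      · rw [Matrix.updateRow_self]
        exact Submodule.zero_mem _
      · rw [Matrix.updateRow_ne hj]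
        exact Submodule.subset_span ⟨j, rfl⟩
  rw [Matrix.rank_eq_finrank_span_row, Matrix.rank_eq_finrank_span_row]
  exact congrArg (fun s : Submodule F (Fin n → F) => Module.finrank F s) hspan
end

section
/- Let f be a real polynomial of degree d ≥ 2 with nonnegative coefficients such that f(1) ≤ 1 and such that f''/f' is nonincreasing on (0,1) (equivalently, f' is log-concave on (0,1)). Define G(α) = α + f(1 − f(α)) − 1. Then the set {α ∈ [0,1] : G(α) = 0} has at most 3 elements; moreover G'' has at most one zero in (0,1) and G' has at most two zeros in [0,1]. -/
open Polynomial

private lemma aux_eval_pos (p : Polynomial ℝ) (hp : p ≠ 0) (hc : ∀ k, 0 ≤ p.coeff k)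
    {x : ℝ} (hx : 0 < x) : 0 < p.eval x := by
  rw [eval_eq_sum_range]
  have h1 : 0 < p.coeff p.natDegree * x ^ p.natDegree :=
    mul_pos (lt_of_le_of_ne (hc _) (Ne.symm (mt leadingCoeff_eq_zero.mp hp))) (pow_pos hx _)
  calc (0:ℝ) < p.coeff p.natDegree * x ^ p.natDegree := h1
    _ ≤ _ := Finset.single_le_sum (f := fun i => p.coeff i * x ^ i)
        (fun i _ => mul_nonneg (hc i) (pow_pos hx i).le) (Finset.self_mem_range_succ _)

private lemma aux_chain (s : Set ℝ) (n : ℕ) (h : ¬ s.encard ≤ n) :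
    ∃ g : Fin (n + 1) → ℝ, StrictMono g ∧ ∀ i, g i ∈ s := by
  push_neg at h
  have h' : ((n + 1 : ℕ) : ℕ∞) ≤ s.encard := by
    have := Order.add_one_le_of_lt h
    exact_mod_cast this
  obtain ⟨t, hts, htc⟩ := Set.exists_subset_encard_eq h'
  have hfin : t.Finite := Set.finite_of_encard_eq_coe htc
  have hcard : hfin.toFinset.card = n + 1 := by
    have h2 := hfin.encard_eq_coe_toFinset_card
    rw [htc] at h2
    exact_mod_cast h2.symm
  let e := hfin.toFinset.orderIsoOfFin hcard
  refine ⟨fun i => (e i : ℝ), ?_, ?_⟩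
  · intro i j hij
    exact Subtype.coe_lt_coe.mpr (e.strictMono hij)
  · intro i
    exact hts (hfin.mem_toFinset.mp (e i).2)

/-- For a polynomial `f` of degree `d ≥ 2` with nonnegative coefficients, `f(1) ≤ 1`,
and `f''/f'` nonincreasing on `(0,1)` (log-concavity of `f'`), the function
`G(α) = α + f(1 − f(α)) − 1` has at most `3` zeros in `[0,1]`; moreover `G''` has at most
one zero in `(0,1)` and `G'` has at most two zeros in `[0,1]`. -/
theorem stmt_19 (f : Polynomial ℝ) (hdeg : 2 ≤ f.natDegree)
    (hcoeff : ∀ k, 0 ≤ f.coeff k) (hf1 : f.eval 1 ≤ 1)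
    (hlc : AntitoneOn
      (fun x => (derivative (derivative f)).eval x / (derivative f).eval x)
      (Set.Ioo (0 : ℝ) 1)) :
    {α ∈ Set.Icc (0 : ℝ) 1 | α + f.eval (1 - f.eval α) - 1 = 0}.encard ≤ 3 ∧
    {x ∈ Set.Ioo (0 : ℝ) 1 |
      deriv (deriv (fun α : ℝ => α + f.eval (1 - f.eval α) - 1)) x = 0}.encard ≤ 1 ∧
    {x ∈ Set.Icc (0 : ℝ) 1 |
      deriv (fun α : ℝ => α + f.eval (1 - f.eval α) - 1) x = 0}.encard ≤ 2 := by
  classical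
  set g1 := derivative f with hg1
  set g2 := derivative g1 with hg2
  -- basic nonvanishing facts
  have hfne : f ≠ 0 := by
    intro h; rw [h] at hdeg; simp at hdeg
  have hg1ne : g1 ≠ 0 := by
    intro h
    have := Polynomial.natDegree_eq_zero_of_derivative_eq_zero h
    omega
  have hg1c : ∀ k, 0 ≤ g1.coeff k := by
    intro k; rw [hg1, coeff_derivative]
    exact mul_nonneg (hcoeff _) (by positivity)
  have hg2c : ∀ k, 0 ≤ g2.coeff k := by
    intro k; rw [hg2, coeff_derivative]
    exact mul_nonneg (hg1c _) (by positivity)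
  have hg2ne : g2 ≠ 0 := by
    intro h
    have h0 := Polynomial.natDegree_eq_zero_of_derivative_eq_zero h
    -- g1 has a nonzero coefficient in degree f.natDegree - 1 ≥ 1
    have hc : g1.coeff (f.natDegree - 1) ≠ 0 := by
      rw [hg1, coeff_derivative]
      have h1 : f.natDegree - 1 + 1 = f.natDegree := by omega
      rw [h1]
      have : f.coeff f.natDegree ≠ 0 := mt leadingCoeff_eq_zero.mp hfne
      positivity
    have := Polynomial.le_natDegree_of_ne_zero hc
    omega
  -- positivity of evaluations
  have hfpos : ∀ x : ℝ, 0 < x → 0 < f.eval x := fun x hx => aux_eval_pos f hfne hcoeff hx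
  have hg1pos : ∀ x : ℝ, 0 < x → 0 < g1.eval x := fun x hx => aux_eval_pos g1 hg1ne hg1c hx
  have hg2pos : ∀ x : ℝ, 0 < x → 0 < g2.eval x := fun x hx => aux_eval_pos g2 hg2ne hg2c hx
  -- strict monotonicity of f and f' on [0,1]
  have hfmono : StrictMonoOn (fun x : ℝ => f.eval x) (Set.Icc 0 1) := by
    apply strictMonoOn_of_deriv_pos (convex_Icc 0 1) (f.continuousOn_aeval.congr ?_)
    · intro x hx
      rw [interior_Icc] at hx
      rw [Polynomial.deriv (p := f)]
      exact hg1pos x hx.1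
    · intro x _; simp [Polynomial.aeval_def]
  have hg1mono : StrictMonoOn (fun x : ℝ => g1.eval x) (Set.Icc 0 1) := by
    apply strictMonoOn_of_deriv_pos (convex_Icc 0 1) (g1.continuousOn_aeval.congr ?_)
    · intro x hx
      rw [interior_Icc] at hx
      rw [Polynomial.deriv (p := g1)]
      exact hg2pos x hx.1
    · intro x _; simp [Polynomial.aeval_def]
  -- 1 - f(x) ∈ (0,1) for x ∈ (0,1)
  have hmem : ∀ x : ℝ, x ∈ Set.Ioo (0:ℝ) 1 → (1 - f.eval x) ∈ Set.Ioo (0:ℝ) 1 := by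
    intro x hx
    have h1 : f.eval x < f.eval 1 :=
      hfmono (Set.mem_Icc.mpr ⟨hx.1.le, hx.2.le⟩) (Set.mem_Icc.mpr ⟨zero_le_one, le_refl 1⟩) hx.2
    have h2 : 0 < f.eval x := hfpos x hx.1
    constructor <;> [linarith; linarith]
  -- polynomial form of G and its derivatives
  set P : Polynomial ℝ := X + f.comp (C 1 - f) - C 1 with hP
  have hgP : (fun α : ℝ => α + f.eval (1 - f.eval α) - 1) = fun x => P.eval x := by
    funext x; simp [hP, eval_comp]
  have hderiv1 : deriv (fun α : ℝ => α + f.eval (1 - f.eval α) - 1)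
      = fun x => (derivative P).eval x := by
    rw [hgP]; funext x; exact Polynomial.deriv (p := P)
  have hderiv2 : deriv (deriv (fun α : ℝ => α + f.eval (1 - f.eval α) - 1))
      = fun x => (derivative (derivative P)).eval x := by
    rw [hderiv1]; funext x; exact Polynomial.deriv (p := derivative P)
  have hE1 : ∀ x : ℝ, (derivative P).eval x
      = 1 - g1.eval (1 - f.eval x) * g1.eval x := by
    intro x
    simp [hP, derivative_comp, eval_comp, hg1]
    ring
  have hE2 : ∀ x : ℝ, (derivative (derivative P)).eval x
      = g2.eval (1 - f.eval x) * (g1.eval x)^2 - g1.eval (1 - f.eval x) * g2.eval x := by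
    intro x
    simp [hP, derivative_comp, derivative_mul, eval_comp, hg1, hg2]
    ring
  -- ratio function and its strict monotonicity
  set r : ℝ → ℝ := fun x => g2.eval x / g1.eval x with hr
  set H : ℝ → ℝ := fun x => r (1 - f.eval x) * g1.eval x - r x with hH
  have hHmono : ∀ x ∈ Set.Ioo (0:ℝ) 1, ∀ y ∈ Set.Ioo (0:ℝ) 1, x < y → H x < H y := by
    intro x hx y hy hxy
    have hux := hmem x hx
    have huy := hmem y hy
    have hfxy : f.eval x < f.eval y :=
      hfmono (Set.mem_Icc.mpr ⟨hx.1.le, hx.2.le⟩) (Set.mem_Icc.mpr ⟨hy.1.le, hy.2.le⟩) hxy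
    have huxy : 1 - f.eval y ≤ 1 - f.eval x := by linarith
    have hr1 : r (1 - f.eval x) ≤ r (1 - f.eval y) := hlc huy hux huxy
    have hr2 : r y ≤ r x := hlc hx hy hxy.le
    have hr3 : 0 < r (1 - f.eval x) := div_pos (hg2pos _ hux.1) (hg1pos _ hux.1)
    have hq1 : g1.eval x < g1.eval y :=
      hg1mono (Set.mem_Icc.mpr ⟨hx.1.le, hx.2.le⟩) (Set.mem_Icc.mpr ⟨hy.1.le, hy.2.le⟩) hxy
    have hq2 : 0 < g1.eval x := hg1pos x hx.1
    have key : r (1 - f.eval x) * g1.eval x < r (1 - f.eval y) * g1.eval y := by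
      nlinarith
    simp only [hH]
    linarith
  -- G'' vanishing implies H vanishing
  have hG2H : ∀ x ∈ Set.Ioo (0:ℝ) 1,
      (derivative (derivative P)).eval x = 0 → H x = 0 := by
    intro x hx h0
    rw [hE2] at h0
    have hux := hmem x hx
    have h1 : g1.eval (1 - f.eval x) ≠ 0 := (hg1pos _ hux.1).ne'
    have h2 : g1.eval x ≠ 0 := (hg1pos x hx.1).ne'
    simp only [hH, hr]
    field_simp
    nlinarith [h0]
  -- Part 2: G'' has at most one zero in (0,1)
  have part2 : {x ∈ Set.Ioo (0 : ℝ) 1 |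
      deriv (deriv (fun α : ℝ => α + f.eval (1 - f.eval α) - 1)) x = 0}.encard ≤ 1 := by
    rw [Set.encard_le_one_iff]
    intro a b ha hb
    rw [Set.mem_setOf_eq, hderiv2] at ha hb
    have hHa : H a = 0 := hG2H a ha.1 ha.2
    have hHb : H b = 0 := hG2H b hb.1 hb.2
    by_contra hne
    rcases lt_or_gt_of_ne hne with h | h
    · exact absurd (hHa.trans hHb.symm) (hHmono a ha.1 b hb.1 h).ne
    · exact absurd (hHb.trans hHa.symm) (hHmono b hb.1 a ha.1 h).ne
  -- Part 3: G' has at most two zeros in [0,1]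
  have gcont : Continuous (fun α : ℝ => α + f.eval (1 - f.eval α) - 1) := by
    rw [hgP]; exact P.continuous_aeval.congr (by intro x; simp [Polynomial.aeval_def])
  have g1cont : Continuous (deriv (fun α : ℝ => α + f.eval (1 - f.eval α) - 1)) := by
    rw [hderiv1]
    exact (derivative P).continuous_aeval.congr (by intro x; simp [Polynomial.aeval_def])
  have part3 : {x ∈ Set.Icc (0 : ℝ) 1 |
      deriv (fun α : ℝ => α + f.eval (1 - f.eval α) - 1) x = 0}.encard ≤ 2 := by
    by_contra hcon
    obtain ⟨c, hmono, hc⟩ := aux_chain _ 2 hcon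
    have h01 : c 0 < c 1 := hmono (by decide)
    have h12 : c 1 < c 2 := hmono (by decide)
    obtain ⟨u, hu, hu0⟩ := exists_deriv_eq_zero h01 (g1cont.continuousOn)
      (((hc 0).2).trans ((hc 1).2).symm)
    obtain ⟨v, hv, hv0⟩ := exists_deriv_eq_zero h12 (g1cont.continuousOn)
      (((hc 1).2).trans ((hc 2).2).symm)
    have huI : u ∈ Set.Ioo (0:ℝ) 1 := ⟨lt_of_le_of_lt ((hc 0).1.1) hu.1,
      lt_of_lt_of_le hu.2 (lt_of_lt_of_le h12 ((hc 2).1.2)).le⟩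
    have hvI : v ∈ Set.Ioo (0:ℝ) 1 := ⟨lt_of_le_of_lt ((hc 0).1.1) (h01.trans hv.1),
      lt_of_lt_of_le hv.2 ((hc 2).1.2)⟩
    have huv : u ≠ v := ne_of_lt (hu.2.trans hv.1)
    have := Set.encard_le_one_iff.mp part2 u v ⟨huI, hu0⟩ ⟨hvI, hv0⟩
    exact huv this
  -- Part 1: G has at most three zeros in [0,1]
  have part1 : {α ∈ Set.Icc (0 : ℝ) 1 | α + f.eval (1 - f.eval α) - 1 = 0}.encard ≤ 3 := by
    by_contra hcon
    obtain ⟨c, hmono, hc⟩ := aux_chain _ 3 hcon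
    have h01 : c 0 < c 1 := hmono (by decide)
    have h12 : c 1 < c 2 := hmono (by decide)
    have h23 : c 2 < c 3 := hmono (by decide)
    have hzero : ∀ i, (fun α : ℝ => α + f.eval (1 - f.eval α) - 1) (c i) = 0 := by
      intro i; exact (hc i).2
    obtain ⟨u, hu, hu0⟩ := exists_deriv_eq_zero h01 (gcont.continuousOn)
      ((hzero 0).trans (hzero 1).symm)
    obtain ⟨v, hv, hv0⟩ := exists_deriv_eq_zero h12 (gcont.continuousOn)
      ((hzero 1).trans (hzero 2).symm)
    obtain ⟨w, hw, hw0⟩ := exists_deriv_eq_zero h23 (gcont.continuousOn)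
      ((hzero 2).trans (hzero 3).symm)
    have hc0 : (0:ℝ) ≤ c 0 := (hc 0).1.1
    have hc3 : c 3 ≤ 1 := (hc 3).1.2
    have huI : u ∈ Set.Icc (0:ℝ) 1 := ⟨hc0.trans hu.1.le,
      ((hu.2.trans (h12.trans h23)).le).trans hc3⟩
    have hvI : v ∈ Set.Icc (0:ℝ) 1 := ⟨hc0.trans (h01.trans hv.1).le,
      ((hv.2.trans h23).le).trans hc3⟩
    have hwI : w ∈ Set.Icc (0:ℝ) 1 := ⟨hc0.trans ((h01.trans h12).trans hw.1).le,
      hw.2.le.trans hc3⟩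
    have huv : u < v := hu.2.trans hv.1
    have hvw : v < w := hv.2.trans hw.1
    have hsub : ({u, v, w} : Set ℝ) ⊆ {x ∈ Set.Icc (0 : ℝ) 1 |
        deriv (fun α : ℝ => α + f.eval (1 - f.eval α) - 1) x = 0} := by
      rintro z (rfl | rfl | rfl)
      · exact ⟨huI, hu0⟩
      · exact ⟨hvI, hv0⟩
      · exact ⟨hwI, hw0⟩
    have h3 : ({u, v, w} : Set ℝ).encard = 3 :=
      Set.encard_eq_three.mpr ⟨u, v, w, huv.ne, (huv.trans hvw).ne, hvw.ne, rfl⟩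
    have := (Set.encard_mono hsub).trans part3
    rw [h3] at this
    norm_num at this
  exact ⟨part1, part2, part3⟩
end
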